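/- arXiv:2303.07276 — 2 statements merged into one kernel-verified Lean document; each statement's English description precedes it below -/
import Mathlib

section
/- Fix K ≥ 1, rewards 0 ≤ r_1 < r_2 < ... < r_K, capacities c_1^M, ..., c_K^M > 0 with total C^M = Σ_k c_k^M, N ≥ 1, prices p_1, ..., p_N ≥ 0, and ε ∈ [0,1]^N. For every c ∈ F_c := {c ∈ ℝ^N : c_i ≥ 0 for all i, Σ_i c_i ≤ C^M}, one has cost(ε, c) = max_{k' ∈ {1,...,K}} cost(ε, c, k'), where cost(ε, c, k') := Σ_{k < k'} (r_k − r_{k'}) c_k^M + Σ_{i=1}^N c_i (r_{k'} ε_i − p_i), cost(ε, c) := Σ_{k < k_c} (r_k − r_{k_c}) c_k^M + Σ_{i=1}^N c_i (r_{k_c} ε_i − p_i), and k_c = k_c(ε, c) := min{ q ∈ {1,...,K} : Σ_i ε_i c_i ≤ Σ_{k=1}^q c_k^M } is the critical type. -/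
open scoped Classical in
/-- The critical type `k_c(ε, c)`: the least machine type `q` such that the total
deployed capacity `∑ i, ε i * c i` is covered by types `1, …, q`. -/
noncomputable def kcrit {K N : ℕ} (hK : 0 < K) (cM : Fin K → ℝ)
    (ε c : Fin N → ℝ) : Fin K :=
  let S := (Finset.univ : Finset (Fin K)).filter fun q =>
      (∑ i, ε i * c i) ≤ ∑ k ∈ Finset.univ.filter (fun k => k ≤ q), cM k
  if h : S.Nonempty then S.min' h else ⟨0, hK⟩

/-- The cost of committing profile `c` under deployment rates `ε`:
`∑_{k < k_c} (r k - r k_c) * cM k + ∑ i, c i * (r k_c * ε i - p i)`. -/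
noncomputable def acost {K N : ℕ} (hK : 0 < K) (r cM : Fin K → ℝ)
    (p ε c : Fin N → ℝ) : ℝ :=
  (∑ k ∈ Finset.univ.filter (fun k => k < kcrit hK cM ε c),
      (r k - r (kcrit hK cM ε c)) * cM k)
    + ∑ i, c i * (r (kcrit hK cM ε c) * ε i - p i)

/-- The affine surrogate cost with fixed critical index `k'`. -/
noncomputable def acostAffine {K N : ℕ} (r cM : Fin K → ℝ)
    (p ε c : Fin N → ℝ) (k' : Fin K) : ℝ :=
  (∑ k ∈ Finset.univ.filter (fun k => k < k'), (r k - r k') * cM k)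
    + ∑ i, c i * (r k' * ε i - p i)

lemma sum_filter_le_eq {K : ℕ} (q : Fin K) (f : Fin K → ℝ) :
    ∑ k ∈ Finset.univ.filter (fun k => k ≤ q), f k
      = (∑ k ∈ Finset.univ.filter (fun k => k < q), f k) + f q := by
  have h : Finset.univ.filter (fun k : Fin K => k ≤ q)
      = insert q (Finset.univ.filter (fun k => k < q)) := by
    ext k
    simp [le_iff_lt_or_eq, or_comm]
  rw [h, Finset.sum_insert (by simp)]
  ring

lemma affine_step {K N : ℕ} (r cM : Fin K → ℝ) (p ε c : Fin N → ℝ)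
    (q : ℕ) (h1 : q + 1 < K) :
    acostAffine r cM p ε c ⟨q+1, h1⟩
      = acostAffine r cM p ε c ⟨q, Nat.lt_of_succ_lt h1⟩
        + (r ⟨q+1, h1⟩ - r ⟨q, Nat.lt_of_succ_lt h1⟩)
          * ((∑ i, ε i * c i)
            - ∑ k ∈ Finset.univ.filter (fun k => k ≤ (⟨q, Nat.lt_of_succ_lt h1⟩ : Fin K)), cM k) := by
  set q0 : Fin K := ⟨q, Nat.lt_of_succ_lt h1⟩
  set q1 : Fin K := ⟨q+1, h1⟩
  have hfilt : Finset.univ.filter (fun k : Fin K => k < q1)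
      = Finset.univ.filter (fun k => k ≤ q0) := by
    ext k
    simp [Fin.lt_def, Fin.le_def, Nat.lt_succ_iff, q0, q1]
  unfold acostAffine
  rw [hfilt, sum_filter_le_eq q0 (fun k => (r k - r q1) * cM k),
    sum_filter_le_eq q0 cM]
  have h2 : ∀ k : Fin K, (r k - r q1) * cM k = (r k - r q0) * cM k + (r q0 - r q1) * cM k := by
    intro k; ring
  rw [Finset.sum_congr rfl (fun k _ => h2 k), Finset.sum_add_distrib, ← Finset.mul_sum]
  have h3 : ∀ i : Fin N, c i * (r q1 * ε i - p i)
      = c i * (r q0 * ε i - p i) + (r q1 - r q0) * (ε i * c i) := by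
    intro i; ring
  rw [Finset.sum_congr rfl (fun i _ => h3 i), Finset.sum_add_distrib, ← Finset.mul_sum]
  ring

/-- On the feasible region, the cost equals the pointwise
maximum of the `K` affine surrogate costs. -/
theorem cost_eq_max_affine
    (K N : ℕ) (hK : 0 < K) (hN : 0 < N)
    (r cM : Fin K → ℝ) (hr0 : 0 ≤ r ⟨0, hK⟩) (hr : StrictMono r)
    (hcM : ∀ k, 0 < cM k)
    (p ε : Fin N → ℝ) (hp : ∀ i, 0 ≤ p i) (hε : ∀ i, ε i ∈ Set.Icc (0:ℝ) 1)
    (c : Fin N → ℝ) (hc : ∀ i, 0 ≤ c i) (hcsum : ∑ i, c i ≤ ∑ k, cM k) :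
    acost hK r cM p ε c
      = Finset.univ.sup' (Finset.univ_nonempty_iff.mpr ⟨⟨0, hK⟩⟩)
          (acostAffine r cM p ε c) := by
  classical
  set S : Finset (Fin K) := (Finset.univ : Finset (Fin K)).filter fun q =>
      (∑ i, ε i * c i) ≤ ∑ k ∈ Finset.univ.filter (fun k => k ≤ q), cM k with hSdef
  have hlast : (⟨K-1, by omega⟩ : Fin K) ∈ S := by
    rw [hSdef, Finset.mem_filter]
    refine ⟨Finset.mem_univ _, ?_⟩
    have h1 : Finset.univ.filter (fun k : Fin K => k ≤ (⟨K-1, by omega⟩ : Fin K))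
        = Finset.univ := by
      ext k; simp [Fin.le_def]; omega
    rw [h1]
    calc ∑ i, ε i * c i ≤ ∑ i, c i := by
          refine Finset.sum_le_sum fun i _ => ?_
          have := (hε i).2
          nlinarith [hc i, (hε i).1]
      _ ≤ ∑ k, cM k := hcsum
  have hne : S.Nonempty := ⟨_, hlast⟩
  have hkc : kcrit hK cM ε c = S.min' hne := by
    rw [kcrit]; simp only [hSdef]; rw [dif_pos hne]
  set kc : Fin K := kcrit hK cM ε c with hkcdef
  -- properties of kc
  have hkc_mem : kc ∈ S := hkc ▸ S.min'_mem hne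
  have hkc_le : ∀ q ∈ S, kc ≤ q := fun q hq => hkc ▸ S.min'_le q hq
  have hDle : (∑ i, ε i * c i) ≤ ∑ k ∈ Finset.univ.filter (fun k => k ≤ kc), cM k := by
    rw [hSdef] at hkc_mem; exact (Finset.mem_filter.mp hkc_mem).2
  have hlt : ∀ q : Fin K, q < kc →
      (∑ k ∈ Finset.univ.filter (fun k => k ≤ q), cM k) < ∑ i, ε i * c i := by
    intro q hq
    by_contra hcon
    push_neg at hcon
    have : q ∈ S := by rw [hSdef, Finset.mem_filter]; exact ⟨Finset.mem_univ _, hcon⟩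
    exact absurd (hkc_le q this) (not_le.mpr hq)
  set A : Fin K → ℝ := acostAffine r cM p ε c with hA
  -- monotone part: q ≤ kc
  have up : ∀ n : ℕ, ∀ q : Fin K, q.val + n = kc.val → A q ≤ A kc := by
    intro n
    induction n with
    | zero =>
      intro q hq
      have : q = kc := Fin.ext (by omega)
      rw [this]
    | succ n ih =>
      intro q hq
      have h1 : q.val + 1 < K := by have := kc.isLt; omega
      have hq0 : (⟨q.val, Nat.lt_of_succ_lt h1⟩ : Fin K) = q := Fin.eta q _
      have step := affine_step r cM p ε c q.val h1
      rw [hq0] at step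
      have hqlt : q < kc := by rw [Fin.lt_def]; omega
      have hS : (∑ k ∈ Finset.univ.filter (fun k => k ≤ q), cM k) < ∑ i, ε i * c i :=
        hlt q hqlt
      have hrr : r q < r ⟨q.val+1, h1⟩ := hr (by rw [Fin.lt_def]; simp)
      have : A q ≤ A ⟨q.val+1, h1⟩ := by
        rw [hA] at *
        nlinarith [step, hrr, hS]
      calc A q ≤ A ⟨q.val+1, h1⟩ := this
        _ ≤ A kc := ih ⟨q.val+1, h1⟩ (by simp; omega)
  -- antitone part: kc ≤ q
  have down : ∀ n : ℕ, ∀ q : Fin K, q.val = kc.val + n → A q ≤ A kc := by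
    intro n
    induction n with
    | zero =>
      intro q hq
      have : q = kc := Fin.ext (by omega)
      rw [this]
    | succ n ih =>
      intro q hq
      have h1 : (q.val - 1) + 1 < K := by have := q.isLt; omega
      set qp : Fin K := ⟨q.val - 1, Nat.lt_of_succ_lt h1⟩ with hqp
      have hq1 : (⟨(q.val - 1) + 1, h1⟩ : Fin K) = q := Fin.ext (by simp; omega)
      have step := affine_step r cM p ε c (q.val - 1) h1
      rw [hq1] at step
      have hmono : (∑ k ∈ Finset.univ.filter (fun k => k ≤ kc), cM k)
          ≤ ∑ k ∈ Finset.univ.filter (fun k => k ≤ qp), cM k := by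
        refine Finset.sum_le_sum_of_subset_of_nonneg ?_ (fun k _ _ => (hcM k).le)
        intro k hk
        simp only [Finset.mem_filter, Finset.mem_univ, true_and] at hk ⊢
        have : kc ≤ qp := by rw [Fin.le_def]; simp [hqp]; omega
        exact le_trans hk this
      have hrr : r qp ≤ r q := (hr.le_iff_le).mpr (by rw [Fin.le_def]; simp [hqp])
      have : A q ≤ A qp := by
        rw [hA] at *
        nlinarith [step, hrr, le_trans hDle hmono]
      calc A q ≤ A qp := this
        _ ≤ A kc := ih qp (by simp [hqp]; omega)
  have hmax : ∀ q : Fin K, A q ≤ A kc := by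
    intro q
    rcases le_or_gt q.val kc.val with h | h
    · exact up (kc.val - q.val) q (by omega)
    · exact down (q.val - kc.val) q (by omega)
  have hacost : acost hK r cM p ε c = A kc := rfl
  rw [hacost]
  refine le_antisymm (Finset.le_sup' _ (Finset.mem_univ kc)) ?_
  exact Finset.sup'_le _ _ fun q _ => hmax q
end

section
/- Fix K ≥ 1, rewards 0 ≤ r_1 < r_2 < ... < r_K, capacities c_1^M, ..., c_K^M > 0 with total C^M = Σ_k c_k^M, N ≥ 1, prices p_1, ..., p_N ≥ 0, and ε ∈ [0,1]^N. Then the function c ↦ cost(ε, c) is convex on the convex set F_c := {c ∈ ℝ^N : c_i ≥ 0 for all i, Σ_i c_i ≤ C^M}. -/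
/-- Cumulative capacity of types `≤ q`. -/
noncomputable def Scap {K : ℕ} (cM : Fin K → ℝ) (q : Fin K) : ℝ :=
  ∑ k ∈ Finset.univ.filter (fun k => k ≤ q), cM k

/-- The affine piece corresponding to critical type `q`, as a function of total
deployed capacity `x`. -/
noncomputable def Lpw {K : ℕ} (r cM : Fin K → ℝ) (q : Fin K) (x : ℝ) : ℝ :=
  (∑ k ∈ Finset.univ.filter (fun k => k < q), (r k - r q) * cM k) + r q * x

/-- The affine piece as a function of the commitment profile `c`. -/
noncomputable def Afun {K N : ℕ} (r cM : Fin K → ℝ) (p ε : Fin N → ℝ)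
    (q : Fin K) (c : Fin N → ℝ) : ℝ :=
  (∑ k ∈ Finset.univ.filter (fun k => k < q), (r k - r q) * cM k)
    + ∑ i, c i * (r q * ε i - p i)

lemma Scap_mono {K : ℕ} {cM : Fin K → ℝ} (hcM : ∀ k, 0 ≤ cM k)
    {a b : Fin K} (hab : a ≤ b) : Scap cM a ≤ Scap cM b := by
  apply Finset.sum_le_sum_of_subset_of_nonneg
  · intro k hk
    simp only [Finset.mem_filter, Finset.mem_univ, true_and] at hk ⊢
    exact hk.trans hab
  · exact fun k _ _ => hcM k

lemma filter_le_insert {K : ℕ} (q : Fin K) :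
    (Finset.univ.filter fun k => k ≤ q) = insert q (Finset.univ.filter fun k => k < q) := by
  ext k
  simp only [Finset.mem_filter, Finset.mem_univ, true_and, Finset.mem_insert]
  constructor
  · intro h; rcases lt_or_eq_of_le h with h | h
    · exact Or.inr h
    · exact Or.inl h
  · rintro (rfl | h)
    · exact le_rfl
    · exact h.le

lemma Lpw_succ {K : ℕ} (r cM : Fin K → ℝ) (q : Fin K) (h : q.1 + 1 < K) (x : ℝ) :
    Lpw r cM ⟨q.1 + 1, h⟩ x
      = Lpw r cM q x + (r ⟨q.1 + 1, h⟩ - r q) * (x - Scap cM q) := by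
  have hflt : (Finset.univ.filter fun k => k < (⟨q.1 + 1, h⟩ : Fin K))
      = Finset.univ.filter fun k => k ≤ q := by
    ext k
    simp only [Finset.mem_filter, Finset.mem_univ, true_and, Fin.lt_def, Fin.le_def]
    omega
  have hnm : q ∉ Finset.univ.filter fun k => k < q := by simp
  rw [Lpw, Lpw, Scap, hflt, filter_le_insert, Finset.sum_insert hnm, Finset.sum_insert hnm]
  simp only [sub_mul, Finset.sum_sub_distrib, ← Finset.mul_sum]
  ring

lemma Lpw_chain_up {K : ℕ} {r : Fin K → ℝ} (hr : Monotone r) (cM : Fin K → ℝ) (x : ℝ) :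
    ∀ n (j q : Fin K), q.1 = j.1 + n → (∀ m, m < q → Scap cM m ≤ x) →
      Lpw r cM j x ≤ Lpw r cM q x := by
  intro n
  induction n with
  | zero =>
    intro j q hq _
    have : j = q := Fin.ext (by omega)
    rw [this]
  | succ n ih =>
    intro j q hq hm
    have hj1 : j.1 + 1 < K := by have := q.isLt; omega
    have hjq : j < q := by rw [Fin.lt_def]; omega
    have h1 : Lpw r cM j x ≤ Lpw r cM ⟨j.1 + 1, hj1⟩ x := by
      rw [Lpw_succ r cM j hj1 x]
      have hS : Scap cM j ≤ x := hm j hjq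
      have hrle : r j ≤ r ⟨j.1 + 1, hj1⟩ := hr (show j.1 ≤ j.1 + 1 from Nat.le_succ _)
      nlinarith
    exact h1.trans (ih ⟨j.1 + 1, hj1⟩ q (show q.1 = j.1 + 1 + n by omega) hm)

lemma Lpw_chain_down {K : ℕ} {r : Fin K → ℝ} (hr : Monotone r) {cM : Fin K → ℝ}
    (hcM : ∀ k, 0 ≤ cM k) (x : ℝ) :
    ∀ n (q j : Fin K), j.1 = q.1 + n → x ≤ Scap cM q →
      Lpw r cM j x ≤ Lpw r cM q x := by
  intro n
  induction n with
  | zero =>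
    intro q j hq _
    have : j = q := Fin.ext (by omega)
    rw [this]
  | succ n ih =>
    intro q j hq hx
    have hq1 : q.1 + 1 < K := by have := j.isLt; omega
    have h2 : Lpw r cM ⟨q.1 + 1, hq1⟩ x ≤ Lpw r cM q x := by
      rw [Lpw_succ r cM q hq1 x]
      have hrle : r q ≤ r ⟨q.1 + 1, hq1⟩ := hr (show q.1 ≤ q.1 + 1 from Nat.le_succ _)
      nlinarith
    have hx' : x ≤ Scap cM ⟨q.1 + 1, hq1⟩ :=
      hx.trans (Scap_mono hcM (show q.1 ≤ q.1 + 1 from Nat.le_succ _))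
    exact (ih ⟨q.1 + 1, hq1⟩ j (show j.1 = q.1 + 1 + n by omega) hx').trans h2

lemma convexOn_affine {N : ℕ} {s : Set (Fin N → ℝ)} (hs : Convex ℝ s)
    (a : ℝ) (w : Fin N → ℝ) :
    ConvexOn ℝ s fun c => a + ∑ i, c i * w i := by
  refine ⟨hs, fun c1 _ c2 _ t u ht hu htu => le_of_eq ?_⟩
  show a + ∑ i, (t • c1 + u • c2) i * w i
      = t • (a + ∑ i, c1 i * w i) + u • (a + ∑ i, c2 i * w i)
  have h1 : ∀ i ∈ Finset.univ, (t • c1 + u • c2) i * w i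
      = t * (c1 i * w i) + u * (c2 i * w i) := by
    intro i _
    simp only [Pi.add_apply, Pi.smul_apply, smul_eq_mul]
    ring
  rw [Finset.sum_congr rfl h1, Finset.sum_add_distrib, ← Finset.mul_sum, ← Finset.mul_sum]
  simp only [smul_eq_mul]
  linear_combination (-a) * htu

lemma convexOn_finset_sup' {N : ℕ} {ι : Type*} {t : Finset ι} (ht : t.Nonempty)
    {s : Set (Fin N → ℝ)} (hs : Convex ℝ s) {f : ι → (Fin N → ℝ) → ℝ}
    (hf : ∀ i ∈ t, ConvexOn ℝ s (f i)) :
    ConvexOn ℝ s fun c => t.sup' ht fun i => f i c := by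
  refine ⟨hs, fun c1 h1 c2 h2 a b ha hb hab => ?_⟩
  apply Finset.sup'_le
  intro i hi
  calc f i (a • c1 + b • c2) ≤ a • f i c1 + b • f i c2 :=
        (hf i hi).2 h1 h2 ha hb hab
    _ ≤ a • (t.sup' ht fun j => f j c1) + b • (t.sup' ht fun j => f j c2) := by
        simp only [smul_eq_mul]
        gcongr
        · exact Finset.le_sup' (fun j => f j c1) hi
        · exact Finset.le_sup' (fun j => f j c2) hi

/-- For fixed deployment rates `ε ∈ [0,1]^N`, the map
`c ↦ cost(ε, c)` is convex on the feasible region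
`F_c = {c : c i ≥ 0, ∑ i, c i ≤ C^M}`. -/
theorem acost_convexOn
    (K N : ℕ) (hK : 0 < K) (hN : 0 < N)
    (r cM : Fin K → ℝ) (hr0 : 0 ≤ r ⟨0, hK⟩) (hr : StrictMono r)
    (hcM : ∀ k, 0 < cM k)
    (p ε : Fin N → ℝ) (hp : ∀ i, 0 ≤ p i) (hε : ∀ i, ε i ∈ Set.Icc (0:ℝ) 1) :
    ConvexOn ℝ {c : Fin N → ℝ | (∀ i, 0 ≤ c i) ∧ ∑ i, c i ≤ ∑ k, cM k}
      (fun c => acost hK r cM p ε c) := by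
  haveI : Nonempty (Fin K) := ⟨⟨0, hK⟩⟩
  set s : Set (Fin N → ℝ) := {c | (∀ i, 0 ≤ c i) ∧ ∑ i, c i ≤ ∑ k, cM k} with hsdef
  have hs : Convex ℝ s := by
    intro c1 h1 c2 h2 a b ha hb hab
    refine ⟨fun i => ?_, ?_⟩
    · simp only [Pi.add_apply, Pi.smul_apply, smul_eq_mul]
      exact add_nonneg (mul_nonneg ha (h1.1 i)) (mul_nonneg hb (h2.1 i))
    · simp only [Pi.add_apply, Pi.smul_apply, smul_eq_mul]
      rw [Finset.sum_add_distrib, ← Finset.mul_sum, ← Finset.mul_sum]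
      have hC : a * (∑ k, cM k) + b * (∑ k, cM k) = ∑ k, cM k := by
        rw [← add_mul, hab, one_mul]
      have ha' := mul_le_mul_of_nonneg_left h1.2 ha
      have hb' := mul_le_mul_of_nonneg_left h2.2 hb
      linarith
  have hAconv : ∀ q : Fin K, ConvexOn ℝ s (Afun r cM p ε q) := fun q =>
    convexOn_affine hs _ _
  have hg : ConvexOn ℝ s
      (fun c => Finset.univ.sup' Finset.univ_nonempty fun q => Afun r cM p ε q c) :=
    convexOn_finset_sup' _ hs fun q _ => hAconv q
  have hKlt : K - 1 < K := by omega
  -- key: on s, acost equals the sup of affine pieces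
  have key : ∀ c ∈ s, acost hK r cM p ε c
      = Finset.univ.sup' Finset.univ_nonempty fun q => Afun r cM p ε q c := by
    intro c hc
    set x : ℝ := ∑ i, ε i * c i with hxdef
    have hx_top : x ≤ Scap cM ⟨K - 1, hKlt⟩ := by
      have h1 : x ≤ ∑ i, c i :=
        Finset.sum_le_sum fun i _ => mul_le_of_le_one_left (hc.1 i) (hε i).2
      have h2 : Scap cM ⟨K - 1, hKlt⟩ = ∑ k, cM k := by
        rw [Scap, Finset.filter_true_of_mem]
        intro k _
        show k.1 ≤ K - 1
        have := k.isLt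
        omega
      rw [h2]
      exact h1.trans hc.2
    have hne : (Finset.univ.filter fun q : Fin K =>
        x ≤ ∑ k ∈ Finset.univ.filter (fun k => k ≤ q), cM k).Nonempty :=
      ⟨⟨K - 1, hKlt⟩, Finset.mem_filter.2 ⟨Finset.mem_univ _, hx_top⟩⟩
    have hkc : kcrit hK cM ε c = (Finset.univ.filter fun q : Fin K =>
        x ≤ ∑ k ∈ Finset.univ.filter (fun k => k ≤ q), cM k).min' hne := by
      rw [kcrit]
      exact dif_pos hne
    set qs : Fin K := (Finset.univ.filter fun q : Fin K =>
        x ≤ ∑ k ∈ Finset.univ.filter (fun k => k ≤ q), cM k).min' hne with hqs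
    have hq1 : x ≤ Scap cM qs := by
      have := Finset.min'_mem _ hne
      rw [← hqs] at this
      exact (Finset.mem_filter.1 this).2
    have hq2 : ∀ m, m < qs → Scap cM m ≤ x := by
      intro m hm
      by_contra hcon
      push_neg at hcon
      have hmem : m ∈ Finset.univ.filter fun q : Fin K =>
          x ≤ ∑ k ∈ Finset.univ.filter (fun k => k ≤ q), cM k :=
        Finset.mem_filter.2 ⟨Finset.mem_univ _, hcon.le⟩
      exact absurd (Finset.min'_le _ _ hmem) (not_le.2 hm)
    have hAL : ∀ q : Fin K, Afun r cM p ε q c = Lpw r cM q x - ∑ i, c i * p i := by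
      intro q
      rw [Afun, Lpw]
      have h1 : ∀ i ∈ Finset.univ, c i * (r q * ε i - p i)
          = r q * (ε i * c i) - c i * p i := fun i _ => by ring
      rw [Finset.sum_congr rfl h1, Finset.sum_sub_distrib, ← Finset.mul_sum]
      ring
    have hle : ∀ j : Fin K, Afun r cM p ε j c ≤ Afun r cM p ε qs c := by
      intro j
      rw [hAL, hAL]
      apply sub_le_sub_right
      rcases le_total j qs with h | h
      · exact Lpw_chain_up hr.monotone cM x (qs.1 - j.1) j qs
          (by rw [Fin.le_def] at h; omega) hq2
      · exact Lpw_chain_down hr.monotone (fun k => (hcM k).le) x (j.1 - qs.1) qs j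
          (by rw [Fin.le_def] at h; omega) hq1
    have hac : acost hK r cM p ε c = Afun r cM p ε (kcrit hK cM ε c) c := rfl
    rw [hac, hkc]
    refine le_antisymm (Finset.le_sup' (fun q => Afun r cM p ε q c) (Finset.mem_univ qs)) ?_
    exact Finset.sup'_le _ _ fun j _ => hle j
  refine ⟨hs, fun c1 h1 c2 h2 a b ha hb hab => ?_⟩
  have hmem : a • c1 + b • c2 ∈ s := hs h1 h2 ha hb hab
  show acost hK r cM p ε (a • c1 + b • c2)
      ≤ a • acost hK r cM p ε c1 + b • acost hK r cM p ε c2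
  rw [key _ hmem, key _ h1, key _ h2]
  exact hg.2 h1 h2 ha hb hab
end
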